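/- Suppose a biquadratic form P(x,y) in x ∈ ℝ^m, y ∈ ℝ^n equals Σ_{t=1}^R L_t(x,y)² with L_t(x,y) = Σ_{i,j} c_{ij}^{(t)} x_i y_j, and suppose the support set S = {(i,j) : coefficient of x_i²y_j² in P is 1, all other monomial coefficients 0} has the property that for any distinct (i,j),(p,q) ∈ S with i ≠ p, j ≠ q, at least one of (i,q), (p,j) is not in S. Then the vectors C_{ij} = (c_{ij}^{(1)},…,c_{ij}^{(R)}) for (i,j) ∈ S form an orthonormal family in ℝ^R, and hence R ≥ |S|. -/

import Mathlib

section Aux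

variable {m n : ℕ} (S : Finset (Fin m × Fin n)) (d : Fin m → Fin n → ℝ)

private lemma aux_inner_single (i : Fin m) (j : Fin n) :
    (∑ a, ∑ b, d a b * (if a = i then (1:ℝ) else 0) * (if b = j then (1:ℝ) else 0)) = d i j := by
  simp [mul_ite, ite_mul, Finset.sum_ite_eq']

private lemma aux_sum_single (i : Fin m) (j : Fin n) :
    (∑ p ∈ S, ((if p.1 = i then (1:ℝ) else 0))^2 * ((if p.2 = j then (1:ℝ) else 0))^2)
      = if (i,j) ∈ S then 1 else 0 := by
  rw [Finset.sum_congr rfl (fun p _ => show _ = if p = (i,j) then (1:ℝ) else 0 by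
    by_cases h1 : p.1 = i <;> by_cases h2 : p.2 = j <;> simp [h1, h2, Prod.ext_iff])]
  simp [Finset.sum_ite_eq']

private lemma aux_inner_row (i : Fin m) (j q : Fin n) :
    (∑ a, ∑ b, d a b * (if a = i then (1:ℝ) else 0)
      * ((if b = j then (1:ℝ) else 0) + (if b = q then 1 else 0))) = d i j + d i q := by
  simp [mul_add, add_mul, mul_ite, ite_mul, Finset.sum_add_distrib, Finset.sum_ite_eq']

private lemma aux_sum_row (i : Fin m) (j q : Fin n) (hjq : j ≠ q) :
    (∑ r ∈ S, ((if r.1 = i then (1:ℝ) else 0))^2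
      * ((if r.2 = j then (1:ℝ) else 0) + (if r.2 = q then 1 else 0))^2)
      = (if (i,j) ∈ S then (1:ℝ) else 0) + (if (i,q) ∈ S then 1 else 0) := by
  rw [Finset.sum_congr rfl (fun r _ => show _ =
      (if r = (i,j) then (1:ℝ) else 0) + (if r = (i,q) then 1 else 0) by
    by_cases h1 : r.1 = i <;> by_cases h3 : r.2 = j <;> by_cases h4 : r.2 = q <;>
      simp_all [Prod.ext_iff])]
  simp [Finset.sum_add_distrib, Finset.sum_ite_eq']

private lemma aux_inner_col (i p : Fin m) (j : Fin n) :
    (∑ a, ∑ b, d a b * ((if a = i then (1:ℝ) else 0) + (if a = p then 1 else 0))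
      * (if b = j then (1:ℝ) else 0)) = d i j + d p j := by
  simp [mul_add, add_mul, mul_ite, ite_mul, Finset.sum_add_distrib, Finset.sum_ite_eq']

private lemma aux_sum_col (i p : Fin m) (j : Fin n) (hip : i ≠ p) :
    (∑ r ∈ S, ((if r.1 = i then (1:ℝ) else 0) + (if r.1 = p then 1 else 0))^2
      * ((if r.2 = j then (1:ℝ) else 0))^2)
      = (if (i,j) ∈ S then (1:ℝ) else 0) + (if (p,j) ∈ S then 1 else 0) := by
  rw [Finset.sum_congr rfl (fun r _ => show _ =
      (if r = (i,j) then (1:ℝ) else 0) + (if r = (p,j) then 1 else 0) by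
    by_cases h1 : r.1 = i <;> by_cases h2 : r.1 = p <;> by_cases h3 : r.2 = j <;>
      simp_all [Prod.ext_iff])]
  simp [Finset.sum_add_distrib, Finset.sum_ite_eq']

private lemma aux_inner_double (i p : Fin m) (j q : Fin n) :
    (∑ a, ∑ b, d a b * ((if a = i then (1:ℝ) else 0) + (if a = p then 1 else 0))
      * ((if b = j then (1:ℝ) else 0) + (if b = q then 1 else 0)))
      = d i j + d i q + d p j + d p q := by
  simp [mul_add, add_mul, mul_ite, ite_mul, Finset.sum_add_distrib, Finset.sum_ite_eq']
  ring

private lemma aux_sum_double (i p : Fin m) (j q : Fin n) (hip : i ≠ p) (hjq : j ≠ q) :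
    (∑ r ∈ S, ((if r.1 = i then (1:ℝ) else 0) + (if r.1 = p then 1 else 0))^2
      * ((if r.2 = j then (1:ℝ) else 0) + (if r.2 = q then 1 else 0))^2)
      = (if (i,j) ∈ S then (1:ℝ) else 0) + (if (i,q) ∈ S then 1 else 0)
        + (if (p,j) ∈ S then 1 else 0) + (if (p,q) ∈ S then 1 else 0) := by
  rw [Finset.sum_congr rfl (fun r _ => show _ =
      (if r = (i,j) then (1:ℝ) else 0) + (if r = (i,q) then 1 else 0)
        + (if r = (p,j) then 1 else 0) + (if r = (p,q) then 1 else 0) by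
    by_cases h1 : r.1 = i <;> by_cases h2 : r.1 = p <;>
      by_cases h3 : r.2 = j <;> by_cases h4 : r.2 = q <;>
      simp_all [Prod.ext_iff])]
  simp [Finset.sum_add_distrib, Finset.sum_ite_eq']

end Aux

/-- if a simple biquadratic form with support `S` satisfying the
rectangle-avoidance property is a sum of `R` squares of bilinear forms, then the
coefficient vectors `C_{ij} = (c_{ij}^{(1)},…,c_{ij}^{(R)})` for `(i,j) ∈ S`
form an orthonormal family in `ℝ^R`, and hence `R ≥ |S|`. -/
theorem support_property_orthonormal (m n R : ℕ) (S : Finset (Fin m × Fin n))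
    (hrect : ∀ (i p : Fin m) (j q : Fin n), (i, j) ∈ S → (p, q) ∈ S →
      (i, j) ≠ (p, q) → i ≠ p → j ≠ q → (i, q) ∉ S ∨ (p, j) ∉ S)
    (c : Fin R → Fin m → Fin n → ℝ)
    (hdec : ∀ (x : Fin m → ℝ) (y : Fin n → ℝ),
      (∑ p ∈ S, (x p.1)^2 * (y p.2)^2) = ∑ t, (∑ i, ∑ j, c t i j * x i * y j)^2) :
    (∀ p ∈ S, ∑ t, (c t p.1 p.2)^2 = 1) ∧
    (∀ p ∈ S, ∀ q ∈ S, p ≠ q → ∑ t, c t p.1 p.2 * c t q.1 q.2 = 0) ∧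
    S.card ≤ R := by
  -- Norm relations
  have key1 : ∀ (i : Fin m) (j : Fin n),
      (∑ t, (c t i j)^2) = if (i,j) ∈ S then 1 else 0 := by
    intro i j
    have h := hdec (fun a => if a = i then 1 else 0) (fun b => if b = j then 1 else 0)
    rw [aux_sum_single] at h
    exact (Finset.sum_congr rfl (fun t _ => by rw [aux_inner_single])).trans h.symm
  -- Row cross relations
  have key2 : ∀ (i : Fin m) (j q : Fin n), j ≠ q → (∑ t, c t i j * c t i q) = 0 := by
    intro i j q hjq
    have h := hdec (fun a => if a = i then 1 else 0)
      (fun b => (if b = j then 1 else 0) + (if b = q then 1 else 0))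
    rw [aux_sum_row S i j q hjq] at h
    rw [Finset.sum_congr rfl (fun t _ => by rw [aux_inner_row])] at h
    have hexp : ∀ t : Fin R, (c t i j + c t i q)^2
        = (c t i j)^2 + (c t i q)^2 + 2 * (c t i j * c t i q) := by intro t; ring
    rw [Finset.sum_congr rfl (fun t _ => hexp t)] at h
    simp only [Finset.sum_add_distrib, ← Finset.mul_sum, key1] at h
    linarith
  -- Column cross relations
  have key3 : ∀ (i p : Fin m) (j : Fin n), i ≠ p → (∑ t, c t i j * c t p j) = 0 := by
    intro i p j hip
    have h := hdec (fun a => (if a = i then 1 else 0) + (if a = p then 1 else 0))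
      (fun b => if b = j then 1 else 0)
    rw [aux_sum_col S i p j hip] at h
    rw [Finset.sum_congr rfl (fun t _ => by rw [aux_inner_col])] at h
    have hexp : ∀ t : Fin R, (c t i j + c t p j)^2
        = (c t i j)^2 + (c t p j)^2 + 2 * (c t i j * c t p j) := by intro t; ring
    rw [Finset.sum_congr rfl (fun t _ => hexp t)] at h
    simp only [Finset.sum_add_distrib, ← Finset.mul_sum, key1] at h
    linarith
  -- Diagonal relation
  have key4 : ∀ (i p : Fin m) (j q : Fin n), i ≠ p → j ≠ q →
      (∑ t, c t i j * c t p q) + (∑ t, c t i q * c t p j) = 0 := by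
    intro i p j q hip hjq
    have h := hdec (fun a => (if a = i then 1 else 0) + (if a = p then 1 else 0))
      (fun b => (if b = j then 1 else 0) + (if b = q then 1 else 0))
    rw [aux_sum_double S i p j q hip hjq] at h
    rw [Finset.sum_congr rfl (fun t _ => by rw [aux_inner_double])] at h
    have hexp : ∀ t : Fin R, (c t i j + c t i q + c t p j + c t p q)^2
        = (c t i j)^2 + (c t i q)^2 + (c t p j)^2 + (c t p q)^2
          + 2 * (c t i j * c t i q) + 2 * (c t p j * c t p q)
          + 2 * (c t i j * c t p j) + 2 * (c t i q * c t p q)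
          + 2 * (c t i j * c t p q) + 2 * (c t i q * c t p j) := by intro t; ring
    rw [Finset.sum_congr rfl (fun t _ => hexp t)] at h
    simp only [Finset.sum_add_distrib, ← Finset.mul_sum, key1,
      key2 i j q hjq, key2 p j q hjq, key3 i p j hip, key3 i p q hip] at h
    linarith
  -- Vanishing vectors outside the support
  have keyz : ∀ (i : Fin m) (j : Fin n), (i,j) ∉ S → ∀ t, c t i j = 0 := by
    intro i j hij t
    have h := key1 i j
    rw [if_neg hij] at h
    have h0 : (c t i j)^2 = 0 := by
      have := Finset.sum_eq_zero_iff_of_nonneg (fun t _ => sq_nonneg (c t i j)) |>.mp h t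
        (Finset.mem_univ t)
      exact this
    exact pow_eq_zero_iff (by norm_num) |>.mp h0
  have hnorm : ∀ p ∈ S, ∑ t, (c t p.1 p.2)^2 = 1 := by
    intro p hp; rw [key1 p.1 p.2, if_pos hp]
  have horth : ∀ p ∈ S, ∀ q ∈ S, p ≠ q → ∑ t, c t p.1 p.2 * c t q.1 q.2 = 0 := by
    intro p hp q hq hpq
    by_cases h1 : p.1 = q.1
    · have h2 : p.2 ≠ q.2 := fun h2 => hpq (Prod.ext h1 h2)
      rw [show (∑ t, c t p.1 p.2 * c t q.1 q.2) = ∑ t, c t p.1 p.2 * c t p.1 q.2 by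
        rw [h1]]
      exact key2 p.1 p.2 q.2 h2
    · by_cases h2 : p.2 = q.2
      · rw [show (∑ t, c t p.1 p.2 * c t q.1 q.2) = ∑ t, c t p.1 p.2 * c t q.1 p.2 by
          rw [h2]]
        exact key3 p.1 q.1 p.2 h1
      · have hp' : (p.1, p.2) ∈ S := by simpa using hp
        have hq' : (q.1, q.2) ∈ S := by simpa using hq
        have hne : (p.1, p.2) ≠ (q.1, q.2) := by simpa using hpq
        have h4 := key4 p.1 q.1 p.2 q.2 h1 h2
        rcases hrect p.1 q.1 p.2 q.2 hp' hq' hne h1 h2 with h | h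
        · have : (∑ t, c t p.1 q.2 * c t q.1 p.2) = 0 :=
            Finset.sum_eq_zero (fun t _ => by rw [keyz _ _ h t, zero_mul])
          linarith
        · have : (∑ t, c t p.1 q.2 * c t q.1 p.2) = 0 :=
            Finset.sum_eq_zero (fun t _ => by rw [keyz _ _ h t, mul_zero])
          linarith
  refine ⟨hnorm, horth, ?_⟩
  -- Orthonormal family in Euclidean space gives the cardinality bound
  classical
  set v : S → EuclideanSpace ℝ (Fin R) := fun p => WithLp.toLp 2 (fun t => c t p.1.1 p.1.2) with hv
  have hon : Orthonormal ℝ v := by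
    rw [orthonormal_iff_ite]
    intro p q
    have hinner : (inner ℝ (v p) (v q) : ℝ) = ∑ t, c t p.1.1 p.1.2 * c t q.1.1 q.1.2 := by
      simp [hv, PiLp.inner_apply, RCLike.inner_apply, mul_comm]
    by_cases hpq : p = q
    · subst hpq
      simp only [if_pos rfl, hinner]
      have := hnorm p.1 p.2
      rw [← this]
      exact Finset.sum_congr rfl (fun t _ => by ring)
    · rw [if_neg hpq, hinner]
      exact horth p.1 p.2 q.1 q.2 (fun h => hpq (Subtype.ext h))
  have hli := hon.linearIndependent
  have hcard := hli.fintype_card_le_finrank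
  simpa [Fintype.card_coe, finrank_euclideanSpace_fin] using hcard
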